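/- Let {X_t} be a Markov chain on a finite state space with positive semidefinite, reversible transition matrix with stationary distribution π, started from π conditioned on an event B. Then the hitting probability satisfies the spectral representation Pr(X_t ∈ B) = π(B) + (1−π(B))·Σ_ℓ κ_ℓ λ_ℓ^t, where λ_ℓ are the nonprincipal eigenvalues of the transition matrix, each κ_ℓ ≥ 0, and Σ_ℓ κ_ℓ = 1; in particular Pr(X_t ∈ B) ≥ π(B) for all t ≥ 0. -/

import Mathlib

open scoped Classical BigOperators

noncomputable def ent {Ω : Type*} [Fintype Ω] (π f : Ω → ℝ) : ℝ :=
  (∑ x, π x * f x * Real.log (f x)) - (∑ x, π x * f x) * Real.log (∑ x, π x * f x)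

noncomputable def condMean {Ω α : Type*} [Fintype Ω] (ν : Ω → ℝ) (g : Ω → α)
    (f : Ω → ℝ) (x : Ω) : ℝ :=
  (∑ y, if g y = g x then ν y * f y else 0) / (∑ y, if g y = g x then ν y else 0)

noncomputable def avgCondEnt {Ω α : Type*} [Fintype Ω] (ν : Ω → ℝ) (g : Ω → α)
    (f : Ω → ℝ) : ℝ :=
  ∑ x, ν x * f x * (Real.log (f x) - Real.log (condMean ν g f x))

noncomputable def matMulVec {Ω : Type*} [Fintype Ω] (P : Ω → Ω → ℝ) (f : Ω → ℝ) (x : Ω) : ℝ :=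
  ∑ y, P x y * f y

noncomputable def dirForm {Ω : Type*} [Fintype Ω] (π : Ω → ℝ) (P : Ω → Ω → ℝ)
    (f g : Ω → ℝ) : ℝ :=
  ∑ x, π x * f x * (g x - matMulVec P g x)

noncomputable def stepDist {Ω : Type*} [Fintype Ω] (P : Ω → Ω → ℝ) (ζ : Ω → ℝ) (y : Ω) : ℝ :=
  ∑ x, ζ x * P x y

noncomputable def adjointMat {Ω : Type*} [Fintype Ω] (π : Ω → ℝ) (P : Ω → Ω → ℝ)
    (x y : Ω) : ℝ :=
  π y * P y x / π x

noncomputable def matComp {Ω : Type*} [Fintype Ω] (P Q : Ω → Ω → ℝ) (x y : Ω) : ℝ :=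
  ∑ z, P x z * Q z y

/- ### Auxiliary machinery -/

noncomputable def symOpAux {Ω : Type*} [Fintype Ω] (S : Ω → Ω → ℝ) :
    EuclideanSpace ℝ Ω →ₗ[ℝ] EuclideanSpace ℝ Ω where
  toFun f := WithLp.toLp 2 (fun x => ∑ y, S x y * f y : Ω → ℝ)
  map_add' f g := by
    ext x
    simp only [PiLp.add_apply, mul_add, Finset.sum_add_distrib]
  map_smul' c f := by
    ext x
    simp only [PiLp.smul_apply, smul_eq_mul, RingHom.id_apply, Finset.mul_sum]
    exact Finset.sum_congr rfl fun y _ => by ring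

theorem symOpAux_apply {Ω : Type*} [Fintype Ω] (S : Ω → Ω → ℝ) (f : EuclideanSpace ℝ Ω) (x : Ω) :
    symOpAux S f x = ∑ y, S x y * f y := rfl

theorem symOpAux_isSymmetric {Ω : Type*} [Fintype Ω] (S : Ω → Ω → ℝ)
    (hS : ∀ x y, S x y = S y x) : (symOpAux S).IsSymmetric := by
  intro f g
  simp only [PiLp.inner_apply, RCLike.inner_apply, starRingEnd_apply, star_trivial,
    symOpAux_apply, Finset.sum_mul, Finset.mul_sum]
  rw [Finset.sum_comm]
  exact Finset.sum_congr rfl fun x _ => Finset.sum_congr rfl fun y _ => by rw [hS x y]; ring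

/-- Maximum principle: eigenvalues of a (sub)stochastic matrix are at most 1. -/
theorem eig_le_one {Ω : Type*} [Fintype Ω] [Nonempty Ω] (P : Ω → Ω → ℝ)
    (hP0 : ∀ x y, 0 ≤ P x y) (hP1 : ∀ x, ∑ y, P x y = 1)
    (μ : ℝ) (g : Ω → ℝ) (hg : g ≠ 0) (heig : ∀ x, ∑ y, P x y * g y = μ * g x) : μ ≤ 1 := by
  obtain ⟨x₀, -, hx₀⟩ := Finset.exists_max_image Finset.univ (fun x => |g x|)
    ⟨Classical.arbitrary Ω, Finset.mem_univ _⟩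
  have hx₀pos : 0 < |g x₀| := by
    rcases lt_or_ge 0 (|g x₀|) with h | h
    · exact h
    · exfalso; apply hg; funext x
      have := hx₀ x (Finset.mem_univ x)
      have : |g x| ≤ 0 := le_trans this h
      have := abs_nonneg (g x)
      simpa using abs_eq_zero.mp (le_antisymm ‹|g x| ≤ 0› (abs_nonneg (g x)) ▸ rfl)
  have key : μ * |g x₀| ≤ 1 * |g x₀| := by
    calc μ * |g x₀| ≤ |μ| * |g x₀| := by
          exact mul_le_mul_of_nonneg_right (le_abs_self μ) (abs_nonneg _)
      _ = |μ * g x₀| := (abs_mul μ (g x₀)).symm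
      _ = |∑ y, P x₀ y * g y| := by rw [heig x₀]
      _ ≤ ∑ y, |P x₀ y * g y| := Finset.abs_sum_le_sum_abs _ _
      _ = ∑ y, P x₀ y * |g y| := by
          exact Finset.sum_congr rfl fun y _ => by
            rw [abs_mul, abs_of_nonneg (hP0 x₀ y)]
      _ ≤ ∑ y, P x₀ y * |g x₀| := by
          exact Finset.sum_le_sum fun y _ =>
            mul_le_mul_of_nonneg_left (hx₀ y (Finset.mem_univ y)) (hP0 x₀ y)
      _ = 1 * |g x₀| := by rw [← Finset.sum_mul, hP1 x₀]
  exact le_of_mul_le_mul_right (by simpa using key) hx₀pos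

theorem stmt16 {Ω : Type*} [Fintype Ω]
    (P : Ω → Ω → ℝ) (π : Ω → ℝ) (B : Finset Ω)
    (hP0 : ∀ x y, 0 ≤ P x y) (hP1 : ∀ x, ∑ y, P x y = 1)
    (hπ0 : ∀ x, 0 < π x) (hπ1 : ∑ x, π x = 1)
    (hrev : ∀ x y, π x * P x y = π y * P y x)
    (hpsd : ∀ f : Ω → ℝ, 0 ≤ ∑ x, π x * f x * matMulVec P f x)
    (hB0 : 0 < ∑ x ∈ B, π x) (hB1 : ∑ x ∈ B, π x < 1) :
    ∃ (m : ℕ) (κ lam : Fin m → ℝ),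
      (∀ ℓ, 0 ≤ κ ℓ) ∧ (∑ ℓ, κ ℓ = 1) ∧
      (∀ ℓ, 0 ≤ lam ℓ ∧ lam ℓ ≤ 1) ∧
      (∀ ℓ, ∃ g : Ω → ℝ, g ≠ 0 ∧ ∀ x, matMulVec P g x = lam ℓ * g x) ∧
      (∀ t : ℕ,
        (∑ x ∈ B, (stepDist P)^[t] (fun y => if y ∈ B then π y / ∑ z ∈ B, π z else 0) x) =
          (∑ x ∈ B, π x) + (1 - ∑ x ∈ B, π x) * ∑ ℓ, κ ℓ * lam ℓ ^ t) ∧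
      (∀ t : ℕ,
        ∑ x ∈ B, π x ≤
          ∑ x ∈ B, (stepDist P)^[t] (fun y => if y ∈ B then π y / ∑ z ∈ B, π z else 0) x) := by
  classical
  -- notation
  set πB : ℝ := ∑ x ∈ B, π x with hπB
  have hBne : B.Nonempty := by
    rcases B.eq_empty_or_nonempty with h | h
    · rw [h] at hπB; simp [hπB] at hB0
    · exact h
  have : Nonempty Ω := ⟨hBne.choose⟩
  have hs : ∀ x, 0 < Real.sqrt (π x) := fun x => Real.sqrt_pos.mpr (hπ0 x)
  have hss : ∀ x, Real.sqrt (π x) * Real.sqrt (π x) = π x :=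
    fun x => Real.mul_self_sqrt (hπ0 x).le
  set S : Ω → Ω → ℝ := fun x y => Real.sqrt (π x) * P x y / Real.sqrt (π y) with hSdef
  have hSP : ∀ x y, Real.sqrt (π y) * S y x = Real.sqrt (π x) * P x y := by
    intro x y
    rw [hSdef]
    show Real.sqrt (π y) * (Real.sqrt (π y) * P y x / Real.sqrt (π x)) = _
    rw [mul_div_assoc']
    rw [div_eq_iff (ne_of_gt (hs x))]
    linear_combination -hrev x y - P x y * hss x + P y x * hss y
  have hSsymm : ∀ x y, S x y = S y x := by
    intro x y
    rw [hSdef]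
    rw [div_eq_div_iff (ne_of_gt (hs y)) (ne_of_gt (hs x))]
    linear_combination hrev x y + P x y * hss x - P y x * hss y
  have hsym : (symOpAux S).IsSymmetric := symOpAux_isSymmetric S hSsymm
  set n : ℕ := Fintype.card Ω with hn'
  have hn : Module.finrank ℝ (EuclideanSpace ℝ Ω) = n := finrank_euclideanSpace
  set u := hsym.eigenvectorBasis hn with hu
  set μ := hsym.eigenvalues hn with hμ
  have happ : ∀ i x, (∑ y, S x y * u i y) = μ i * u i x := by
    intro i x
    have h := hsym.apply_eigenvectorBasis hn i
    have h2 := congrArg (fun f : EuclideanSpace ℝ Ω => f x) h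
    rw [← symOpAux_apply, h, PiLp.smul_apply, smul_eq_mul]
    rfl
  -- eigenfunctions of P itself
  have heigP : ∀ i, (fun x => u i x / Real.sqrt (π x)) ≠ 0 ∧
      ∀ x, matMulVec P (fun x => u i x / Real.sqrt (π x)) x
        = μ i * (u i x / Real.sqrt (π x)) := by
    intro i
    constructor
    · intro h0
      apply u.toBasis.ne_zero i
      rw [OrthonormalBasis.coe_toBasis]
      ext x
      have hx := congrFun h0 x
      simp only [Pi.zero_apply] at hx
      rcases div_eq_zero_iff.mp hx with h | h
      · exact h
      · exact absurd h (ne_of_gt (hs x))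
    · intro x
      show (∑ y, P x y * (u i y / Real.sqrt (π y))) = _
      have h1 : ∀ y, P x y * (u i y / Real.sqrt (π y)) = (S x y * u i y) / Real.sqrt (π x) := by
        intro y
        rw [hSdef]
        field_simp [(hs x).ne', (hs y).ne']
      calc (∑ y, P x y * (u i y / Real.sqrt (π y)))
          = (∑ y, S x y * u i y) / Real.sqrt (π x) := by
            rw [Finset.sum_div]; exact Finset.sum_congr rfl fun y _ => h1 y
        _ = μ i * u i x / Real.sqrt (π x) := by rw [happ]
        _ = μ i * (u i x / Real.sqrt (π x)) := by ring
  -- eigenvalues are in [0,1]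
  have hμ1 : ∀ i, μ i ≤ 1 := fun i =>
    eig_le_one P hP0 hP1 (μ i) _ (heigP i).1 (heigP i).2
  have hpsdT : ∀ f : EuclideanSpace ℝ Ω, 0 ≤ ∑ x, f x * ∑ y, S x y * f y := by
    intro f
    have h := hpsd (fun x => f x / Real.sqrt (π x))
    have he : (∑ x, π x * (f x / Real.sqrt (π x)) *
        matMulVec P (fun z => f z / Real.sqrt (π z)) x) = ∑ x, f x * ∑ y, S x y * f y := by
      refine Finset.sum_congr rfl fun x _ => ?_
      show π x * (f x / Real.sqrt (π x)) * (∑ y, P x y * (f y / Real.sqrt (π y))) = _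
      rw [Finset.mul_sum]
      refine ?_
      have hx : π x * (f x / Real.sqrt (π x)) = Real.sqrt (π x) * f x := by
        rw [← mul_div_assoc]
        rw [div_eq_iff (ne_of_gt (hs x))]
        linear_combination (-f x) * hss x
      rw [hx, Finset.mul_sum]
      refine Finset.sum_congr rfl fun y _ => ?_
      rw [hSdef]
      field_simp [(hs x).ne', (hs y).ne']
    rw [← he]; exact h
  have hμ0 : ∀ i, 0 ≤ μ i := by
    intro i
    have h1 : (inner (𝕜 := ℝ) (u i) (u i)) = 1 := by
      rw [real_inner_self_eq_norm_mul_norm, u.orthonormal.1 i]; norm_num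
    have h2 : (inner (𝕜 := ℝ) (u i) (symOpAux S (u i))) = μ i := by
      rw [hsym.apply_eigenvectorBasis hn i]
      rw [real_inner_smul_right, h1]
      norm_num
      rfl
    have h3 : 0 ≤ (inner (𝕜 := ℝ) (u i) (symOpAux S (u i))) := by
      have := hpsdT (u i)
      simpa [PiLp.inner_apply, RCLike.inner_apply, symOpAux_apply, mul_comm] using this
    linarith [h2 ▸ h3]
  -- inner products
  have hip : ∀ f g : EuclideanSpace ℝ Ω, (inner (𝕜 := ℝ) f g) = ∑ x, f x * g x := by
    intro f g
    simp [PiLp.inner_apply, RCLike.inner_apply, starRingEnd_apply, star_trivial]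
    exact Finset.sum_congr rfl fun x _ => mul_comm _ _
  set v : EuclideanSpace ℝ Ω := WithLp.toLp 2 (fun x => if x ∈ B then Real.sqrt (π x) else 0 : Ω → ℝ)
    with hvdef
  set w : EuclideanSpace ℝ Ω := WithLp.toLp 2 (fun x => Real.sqrt (π x) : Ω → ℝ) with hwdef
  have hvx : ∀ x, v x = if x ∈ B then Real.sqrt (π x) else 0 := fun x => rfl
  have hwx : ∀ x, w x = Real.sqrt (π x) := fun x => rfl
  set c : Fin n → ℝ := fun i => inner (𝕜 := ℝ) (u i) v with hcdef
  have hvv : (inner (𝕜 := ℝ) v v) = πB := by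
    rw [hip]
    have h1 : ∀ x, v x * v x = if x ∈ B then π x else 0 := by
      intro x
      rw [hvx x]
      by_cases hxB : x ∈ B <;> simp [hxB, hss x]
    simp_rw [h1]
    rw [Finset.sum_ite_mem, Finset.univ_inter, hπB]
  have hwv : (inner (𝕜 := ℝ) w v) = πB := by
    rw [hip]
    have h1 : ∀ x, w x * v x = if x ∈ B then π x else 0 := by
      intro x
      rw [hvx x, hwx x]
      by_cases hxB : x ∈ B <;> simp [hxB, hss x]
    simp_rw [h1]
    rw [Finset.sum_ite_mem, Finset.univ_inter, hπB]
  have hww : (inner (𝕜 := ℝ) w w) = 1 := by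
    rw [hip]
    simp_rw [hwx, hss]
    exact hπ1
  have hTw : symOpAux S w = w := by
    ext x
    show (∑ y, S x y * w y) = w x
    have h1 : ∀ y, S x y * w y = Real.sqrt (π x) * P x y := by
      intro y
      rw [hwx y, mul_comm, hSsymm x y, hSP x y]
    simp_rw [h1]
    rw [← Finset.mul_sum, hP1 x, mul_one, hwx]
  have hworth : ∀ i, μ i ≠ 1 → (inner (𝕜 := ℝ) w (u i)) = 0 := by
    intro i hi
    have h := hsym w (u i)
    rw [hTw, hsym.apply_eigenvectorBasis hn i, real_inner_smul_right] at h
    rw [RCLike.ofReal_real_eq_id, id_eq] at h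
    have h2 : (1 - μ i) * (inner (𝕜 := ℝ) w (u i)) = 0 := by linear_combination h
    rcases mul_eq_zero.mp h2 with h3 | h3
    · exact absurd (by linarith : μ i = 1) hi
    · exact h3
  -- Parseval identities
  have hc2 : (∑ i, c i ^ 2) = πB := by
    have h := u.sum_inner_mul_inner v v
    rw [hvv] at h
    rw [← h]
    refine Finset.sum_congr rfl fun i _ => ?_
    rw [sq]
    show (inner (𝕜 := ℝ) (u i) v) * (inner (𝕜 := ℝ) (u i) v)
      = inner (𝕜 := ℝ) v (u i) * inner (𝕜 := ℝ) (u i) v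
    rw [real_inner_comm v (u i)]
  have hwc : (∑ i, (inner (𝕜 := ℝ) w (u i)) * c i) = πB := by
    have h := u.sum_inner_mul_inner w v
    rw [hwv] at h
    exact h
  have hw2 : (∑ i, (inner (𝕜 := ℝ) w (u i)) ^ 2) = 1 := by
    have h := u.sum_inner_mul_inner w w
    rw [hww] at h
    rw [← h]
    refine Finset.sum_congr rfl fun i _ => ?_
    rw [sq, real_inner_comm w (u i)]
  set cstar : ℝ := ∑ i ∈ Finset.univ.filter (fun i => μ i = 1), c i ^ 2 with hcstar
  have hcstar0 : 0 ≤ cstar := Finset.sum_nonneg fun i _ => sq_nonneg _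
  have hcs : πB ^ 2 ≤ cstar := by
    have hcond : ∀ i ∈ Finset.univ, ((inner (𝕜 := ℝ) w (u i)) * c i ≠ 0) → μ i = 1 := by
      intro i _ hne
      by_contra hne1
      exact hne (by rw [hworth i hne1, zero_mul])
    have h1 : (∑ i ∈ Finset.univ.filter (fun i => μ i = 1),
        (inner (𝕜 := ℝ) w (u i)) * c i) = πB :=
      (Finset.sum_filter_of_ne hcond).trans hwc
    have h2 := Finset.sum_mul_sq_le_sq_mul_sq (Finset.univ.filter (fun i => μ i = 1))
      (fun i => inner (𝕜 := ℝ) w (u i)) c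
    have h3 : (∑ i ∈ Finset.univ.filter (fun i => μ i = 1),
        (inner (𝕜 := ℝ) w (u i)) ^ 2) ≤ 1 := by
      rw [← hw2]
      exact Finset.sum_le_sum_of_subset_of_nonneg (Finset.filter_subset _ _)
        fun i _ _ => sq_nonneg _
    calc πB ^ 2 = (∑ i ∈ Finset.univ.filter (fun i => μ i = 1),
          (inner (𝕜 := ℝ) w (u i)) * c i) ^ 2 := by rw [h1]
      _ ≤ (∑ i ∈ Finset.univ.filter (fun i => μ i = 1), (inner (𝕜 := ℝ) w (u i)) ^ 2) *
          (∑ i ∈ Finset.univ.filter (fun i => μ i = 1), c i ^ 2) := h2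
      _ ≤ 1 * cstar := by
          refine mul_le_mul_of_nonneg_right h3 ?_
          exact Finset.sum_nonneg fun i _ => sq_nonneg _
      _ = cstar := one_mul _
  -- time evolution
  set ζ : Ω → ℝ := fun y => if y ∈ B then π y / πB else 0 with hζdef
  set e : ℕ → EuclideanSpace ℝ Ω := fun t => ∑ i, (c i * μ i ^ t) • u i with hedef
  have he0 : e 0 = v := by
    rw [hedef]
    simp only [pow_zero, mul_one]
    exact u.sum_repr' v
  have hes : ∀ t, symOpAux S (e t) = e (t + 1) := by
    intro t
    rw [hedef, map_sum]
    refine Finset.sum_congr rfl fun i _ => ?_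
    rw [map_smul, hsym.apply_eigenvectorBasis hn i, smul_smul]
    congr 1
    show c i * μ i ^ t * μ i = c i * μ i ^ (t + 1)
    ring
  have hstep : ∀ t x, (stepDist P)^[t] ζ x = Real.sqrt (π x) * e t x / πB := by
    intro t
    induction t with
    | zero =>
      intro x
      simp only [Function.iterate_zero, id_eq, he0]
      show (if x ∈ B then π x / πB else 0) = Real.sqrt (π x) * v x / πB
      rw [hvx x]
      by_cases hxB : x ∈ B
      · simp only [if_pos hxB]
        rw [hss x]
      · simp [hxB]
    | succ t ih =>
      intro x
      rw [Function.iterate_succ_apply']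
      show (∑ z, ((stepDist P)^[t] ζ) z * P z x) = _
      calc (∑ z, ((stepDist P)^[t] ζ) z * P z x)
          = ∑ z, (Real.sqrt (π z) * e t z / πB) * P z x :=
            Finset.sum_congr rfl fun z _ => by rw [ih z]
        _ = ∑ z, Real.sqrt (π x) * (S x z * e t z) / πB := by
            refine Finset.sum_congr rfl fun z _ => ?_
            linear_combination (-(e t z / πB)) * hSP z x
        _ = Real.sqrt (π x) * (∑ z, S x z * e t z) / πB := by
            rw [Finset.mul_sum, Finset.sum_div]
        _ = Real.sqrt (π x) * (symOpAux S (e t) x) / πB := by rw [symOpAux_apply]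
        _ = Real.sqrt (π x) * e (t + 1) x / πB := by rw [hes t]
  have claimB : ∀ t, (∑ x ∈ B, (stepDist P)^[t] ζ x) = (∑ i, c i ^ 2 * μ i ^ t) / πB := by
    intro t
    have h1 : (∑ x ∈ B, (stepDist P)^[t] ζ x) = (∑ x ∈ B, Real.sqrt (π x) * e t x) / πB := by
      rw [Finset.sum_div]
      exact Finset.sum_congr rfl fun x _ => hstep t x
    have h2 : (∑ x ∈ B, Real.sqrt (π x) * e t x) = inner (𝕜 := ℝ) v (e t) := by
      rw [hip]
      rw [← Finset.univ_inter B, ← Finset.sum_ite_mem]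
      refine Finset.sum_congr rfl fun x _ => ?_
      rw [hvx x]
      by_cases hxB : x ∈ B <;> simp [hxB]
    have h3 : (inner (𝕜 := ℝ) v (e t)) = ∑ i, c i ^ 2 * μ i ^ t := by
      rw [hedef]
      rw [inner_sum]
      refine Finset.sum_congr rfl fun i _ => ?_
      rw [real_inner_smul_right]
      have hcomm : (inner (𝕜 := ℝ) v (u i)) = c i := by
        rw [hcdef]
        show (inner (𝕜 := ℝ) v (u i)) = inner (𝕜 := ℝ) (u i) v
        exact real_inner_comm (u i) v
      rw [hcomm]
      ring
    rw [h1, h2, h3]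
  -- assembly
  set D : ℝ := πB * (1 - πB) with hDdef
  have hD : 0 < D := mul_pos hB0 (by linarith)
  set κ : Fin (n + 1) → ℝ :=
    Fin.snoc (fun i => if μ i = 1 then 0 else c i ^ 2 / D) ((cstar - πB ^ 2) / D) with hκdef
  set lam : Fin (n + 1) → ℝ := Fin.snoc μ 1 with hlamdef
  have hκ0 : ∀ ℓ, 0 ≤ κ ℓ := by
    refine Fin.lastCases ?_ ?_
    · rw [hκdef]
      simp only [Fin.snoc_last]
      exact div_nonneg (by linarith) hD.le
    · intro i
      rw [hκdef]
      simp only [Fin.snoc_castSucc]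
      split_ifs
      · exact le_refl 0
      · exact div_nonneg (sq_nonneg _) hD.le
  have hsumKL : ∀ t : ℕ, (∑ ℓ, κ ℓ * lam ℓ ^ t) = (∑ i, c i ^ 2 * μ i ^ t) / D - πB ^ 2 / D := by
    intro t
    rw [Fin.sum_univ_castSucc]
    rw [hκdef, hlamdef]
    simp only [Fin.snoc_castSucc, Fin.snoc_last, one_pow, mul_one]
    have h1 : ∀ i : Fin n, (if μ i = 1 then 0 else c i ^ 2 / D) * μ i ^ t
        = c i ^ 2 * μ i ^ t / D - (if μ i = 1 then c i ^ 2 / D else 0) := by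
      intro i
      split_ifs with h
      · rw [h]; ring
      · ring
    simp_rw [h1]
    rw [Finset.sum_sub_distrib, ← Finset.sum_filter, ← Finset.sum_div, ← Finset.sum_div, hcstar]
    ring
  have hκsum : (∑ ℓ, κ ℓ) = 1 := by
    have h0 := hsumKL 0
    simp only [pow_zero, mul_one] at h0
    rw [h0, hc2, div_sub_div_same, div_eq_one_iff_eq hD.ne', hDdef]
    ring
  have hlam01 : ∀ ℓ, 0 ≤ lam ℓ ∧ lam ℓ ≤ 1 := by
    refine Fin.lastCases ?_ ?_
    · rw [hlamdef]; simp only [Fin.snoc_last]; norm_num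
    · intro i
      rw [hlamdef]; simp only [Fin.snoc_castSucc]
      exact ⟨hμ0 i, hμ1 i⟩
  have heigfn : ∀ ℓ, ∃ g : Ω → ℝ, g ≠ 0 ∧ ∀ x, matMulVec P g x = lam ℓ * g x := by
    refine Fin.lastCases ?_ ?_
    · rw [hlamdef]
      simp only [Fin.snoc_last]
      refine ⟨fun _ => 1, ?_, ?_⟩
      · intro h
        have := congrFun h (Classical.arbitrary Ω)
        norm_num at this
      · intro x
        show (∑ y, P x y * 1) = 1 * 1
        simp [hP1 x]
    · intro i
      rw [hlamdef]
      simp only [Fin.snoc_castSucc]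
      exact ⟨_, (heigP i).1, (heigP i).2⟩
  have hiden : ∀ t : ℕ,
      (∑ x ∈ B, (stepDist P)^[t] ζ x) = πB + (1 - πB) * ∑ ℓ, κ ℓ * lam ℓ ^ t := by
    intro t
    rw [claimB t, hsumKL t]
    rw [hDdef]
    field_simp [hB0.ne', (show (1:ℝ) - πB ≠ 0 by linarith)]
    ring
  refine ⟨n + 1, κ, lam, hκ0, hκsum, hlam01, heigfn, fun t => hiden t, fun t => ?_⟩
  rw [hiden t]
  have hnn : 0 ≤ ∑ ℓ, κ ℓ * lam ℓ ^ t :=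
    Finset.sum_nonneg fun ℓ _ => mul_nonneg (hκ0 ℓ) (pow_nonneg (hlam01 ℓ).1 t)
  nlinarith
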